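/- Let f, g ∈ ℝ[z₁,…,zₙ] be non-zero polynomials that are not real constant multiples of each other, and set h = f + i·g. Then the following are equivalent: (1) h is stable (i.e., g ≪ f); (2) |h(z)| > |h(z̄)| for all z = (z₁,…,zₙ) ∈ ℂⁿ with Im(zⱼ) > 0 for all j, where z̄ = (z̄₁,…,z̄ₙ); (3) the polynomial f + z_{n+1}·g in n+1 variables is real stable; (4) f and g are real stable and Im(f(z)/g(z)) ≥ 0 whenever Im(zⱼ) > 0 for all 1 ≤ j ≤ n; (5) g(λt+α) ≪ f(λt+α) as univariate polynomials in t, for all λ ∈ ℝ₊ⁿ and α ∈ ℝⁿ. -/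

import Mathlib

open MvPolynomial

/-- A complex polynomial is *stable* if it is non-vanishing whenever all
variables lie in the open upper half-plane. -/
def IsStable {σ : Type*} (f : MvPolynomial σ ℂ) : Prop :=
  ∀ z : σ → ℂ, (∀ i, 0 < (z i).im) → MvPolynomial.eval z f ≠ 0

/-- A real polynomial is *real stable* if it is non-vanishing whenever all
variables lie in the open upper half-plane. -/
def IsRealStable {σ : Type*} (f : MvPolynomial σ ℝ) : Prop :=
  ∀ z : σ → ℂ, (∀ i, 0 < (z i).im) → MvPolynomial.aeval z f ≠ 0

/-- Restriction of a real polynomial in `n` variables to the real line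
`t ↦ λ·t + α`, yielding a univariate real polynomial. -/
noncomputable def lineRestrict {n : ℕ} (f : MvPolynomial (Fin n) ℝ)
    (lam a : Fin n → ℝ) : Polynomial ℝ :=
  MvPolynomial.aeval (fun i => Polynomial.C (lam i) * Polynomial.X + Polynomial.C (a i)) f

namespace HBaux

open Polynomial in
lemma abs_sub_conj_le {r t : ℂ} (hr : r.im ≤ 0) (ht : 0 < t.im) :
    ‖t - (starRingEnd ℂ) r‖ ≤ ‖t - r‖ := by
  rw [Complex.norm_def, Complex.norm_def]
  apply Real.sqrt_le_sqrt
  simp only [Complex.normSq_apply, Complex.sub_re, Complex.sub_im, Complex.conj_re,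
    Complex.conj_im]
  nlinarith

open Polynomial in
lemma abs_eval_map_conj_le (P : Polynomial ℂ) (hP : ∀ t : ℂ, 0 < t.im → P.eval t ≠ 0)
    {t : ℂ} (ht : 0 < t.im) :
    ‖(P.map (starRingEnd ℂ)).eval t‖ ≤ ‖P.eval t‖ := by
  rcases eq_or_ne P 0 with rfl | hP0
  · simp
  have hsp := (IsAlgClosed.splits P).eq_prod_roots
  have hroots : ∀ r ∈ P.roots, r.im ≤ 0 := by
    intro r hr
    by_contra hcon
    exact hP r (lt_of_not_ge hcon) ((mem_roots hP0).mp hr)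
  calc ‖(P.map (starRingEnd ℂ)).eval t‖
      = ‖P.leadingCoeff‖ *
        (P.roots.map (fun r => ‖t - (starRingEnd ℂ) r‖)).prod := by
        conv_lhs => rw [hsp]
        rw [Polynomial.map_mul, Polynomial.map_multiset_prod, Polynomial.map_C,
          Polynomial.eval_mul, Polynomial.eval_C, norm_mul, Multiset.map_map,
          Polynomial.eval_multiset_prod, Multiset.map_map,
          (show ∀ m : Multiset ℂ, ‖m.prod‖ = (m.map norm).prod from fun m => map_multiset_prod (normHom : ℂ →*₀ ℝ) m), Multiset.map_map]
        simp [Function.comp_def]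
    _ ≤ ‖P.leadingCoeff‖ *
        (P.roots.map (fun r => ‖t - r‖)).prod := by
        apply mul_le_mul_of_nonneg_left _ (norm_nonneg _)
        exact Multiset.prod_map_le_prod_map₀ _ _ (fun r _ => norm_nonneg _)
          (fun r hr => abs_sub_conj_le (hroots r hr) ht)
    _ = ‖P.eval t‖ := by
        conv_rhs => rw [hsp]
        rw [Polynomial.eval_mul, Polynomial.eval_C, norm_mul,
          Polynomial.eval_multiset_prod, Multiset.map_map,
          (show ∀ m : Multiset ℂ, ‖m.prod‖ = (m.map norm).prod from fun m => map_multiset_prod (normHom : ℂ →*₀ ℝ) m), Multiset.map_map]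
        simp [Function.comp_def]

lemma upper_infinite : {t : ℂ | 0 < t.im}.Infinite := by
  apply Set.infinite_of_injective_forall_mem (f := fun x : ℝ => (⟨x, 1⟩ : ℂ))
  case hi =>
    intro a b hab
    simpa [Complex.ext_iff] using hab
  case hf =>
    intro a
    simp [Set.mem_setOf_eq]

lemma mv_eq_zero_of_upper (n : ℕ) (p : MvPolynomial (Fin n) ℂ)
    (h : ∀ z : Fin n → ℂ, (∀ i, 0 < (z i).im) → MvPolynomial.eval z p = 0) : p = 0 := by
  induction n with
  | zero =>
    have h0 := h (fun i => i.elim0) (fun i => i.elim0)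
    rw [eq_C_of_isEmpty p] at h0 ⊢
    rw [eval_C] at h0
    rw [h0, map_zero]
  | succ n ih =>
    have hq : ∀ k, (MvPolynomial.finSuccEquiv ℂ n p).coeff k = 0 := by
      intro k
      apply ih
      intro s hs
      have hzero : Polynomial.map (MvPolynomial.eval s) (MvPolynomial.finSuccEquiv ℂ n p) = 0 := by
        apply Polynomial.eq_zero_of_infinite_isRoot
        refine upper_infinite.mono ?_
        intro t ht
        simp only [Set.mem_setOf_eq, Polynomial.IsRoot]
        rw [← eval_eq_eval_mv_eval']
        apply h
        intro i
        refine Fin.cases ?_ ?_ i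
        · exact ht
        · exact hs
      have := congrArg (fun q => Polynomial.coeff q k) hzero
      simpa [Polynomial.coeff_map] using this
    have : MvPolynomial.finSuccEquiv ℂ n p = 0 := Polynomial.ext (fun k => by simp [hq k])
    have := congrArg (MvPolynomial.finSuccEquiv ℂ n).symm this
    simpa using this

lemma mv_eval_differentiable {n : ℕ} (p : MvPolynomial (Fin n) ℂ) :
    Differentiable ℂ (fun z : Fin n → ℂ => MvPolynomial.eval z p) := by
  induction p using MvPolynomial.induction_on with
  | C a => simp only [eval_C]; exact differentiable_const (a : ℂ)
  | add p q hp hq => simp only [map_add]; exact hp.add hq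
  | mul_X p i hp =>
    simp only [map_mul, eval_X]
    exact hp.mul (ContinuousLinearMap.proj (R := ℂ) (φ := fun _ : Fin n => ℂ) i).differentiable

variable {n : ℕ}

lemma aeval_eq_eval_map (z : Fin n → ℂ) (f : MvPolynomial (Fin n) ℝ) :
    MvPolynomial.aeval z f = MvPolynomial.eval z (MvPolynomial.map (algebraMap ℝ ℂ) f) := by
  rw [MvPolynomial.eval_map, MvPolynomial.aeval_def]

lemma eval_H (f g : MvPolynomial (Fin n) ℝ) (z : Fin n → ℂ) :
    MvPolynomial.eval z (MvPolynomial.map (algebraMap ℝ ℂ) f +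
      Complex.I • MvPolynomial.map (algebraMap ℝ ℂ) g) =
    MvPolynomial.aeval z f + Complex.I * MvPolynomial.aeval z g := by
  rw [map_add, MvPolynomial.smul_eval, aeval_eq_eval_map, aeval_eq_eval_map]

lemma eval_Hs (f g : MvPolynomial (Fin n) ℝ) (z : Fin n → ℂ) :
    MvPolynomial.eval z (MvPolynomial.map (algebraMap ℝ ℂ) f -
      Complex.I • MvPolynomial.map (algebraMap ℝ ℂ) g) =
    MvPolynomial.aeval z f - Complex.I * MvPolynomial.aeval z g := by
  rw [map_sub, MvPolynomial.smul_eval, aeval_eq_eval_map, aeval_eq_eval_map]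

lemma aeval_conj (f : MvPolynomial (Fin n) ℝ) (z : Fin n → ℂ) :
    MvPolynomial.aeval (fun j => (starRingEnd ℂ) (z j)) f =
      (starRingEnd ℂ) (MvPolynomial.aeval z f) := by
  have := MvPolynomial.comp_aeval_apply (R := ℝ) (f := z) Complex.conjAe.toAlgHom f
  simpa [Complex.conjAe] using this.symm

lemma aeval_lineRestrict (f : MvPolynomial (Fin n) ℝ) (lam a : Fin n → ℝ) (t : ℂ) :
    Polynomial.aeval t (lineRestrict f lam a) =
      MvPolynomial.aeval (fun j => (lam j : ℂ) * t + (a j : ℂ)) f := by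
  rw [lineRestrict, MvPolynomial.comp_aeval_apply (R := ℝ)
    (f := fun i => Polynomial.C (lam i) * Polynomial.X + Polynomial.C (a i))
    (Polynomial.aeval t) f]
  have harg : (fun i => (Polynomial.aeval t) (Polynomial.C (lam i) * Polynomial.X +
      Polynomial.C (a i))) = fun j => (lam j : ℂ) * t + (a j : ℂ) := by
    funext i
    simp [Polynomial.aeval_C]
  rw [harg]

lemma line_mem (lam a : Fin n → ℝ) (hlam : ∀ i, 0 < lam i) {t : ℂ} (ht : 0 < t.im) :
    ∀ j, 0 < ((lam j : ℂ) * t + (a j : ℂ)).im := by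
  intro j
  simp only [Complex.add_im, Complex.mul_im, Complex.ofReal_re, Complex.ofReal_im]
  have := mul_pos (hlam j) ht
  simp only [zero_mul, add_zero]
  linarith

/-- The key inequality: if `f + ig` is non-vanishing on the polydisk, then
`|f(z) - i g(z)| ≤ |f(z) + i g(z)|` there. -/
lemma abs_sub_le_abs_add (f g : MvPolynomial (Fin n) ℝ)
    (hst : ∀ z : Fin n → ℂ, (∀ i, 0 < (z i).im) →
      MvPolynomial.aeval z f + Complex.I * MvPolynomial.aeval z g ≠ 0)
    (z : Fin n → ℂ) (hz : ∀ j, 0 < (z j).im) :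
    ‖MvPolynomial.aeval z f - Complex.I * MvPolynomial.aeval z g‖ ≤
      ‖MvPolynomial.aeval z f + Complex.I * MvPolynomial.aeval z g‖ := by
  set lam : Fin n → ℝ := fun j => (z j).im with hlamdef
  set a : Fin n → ℝ := fun j => (z j).re with hadef
  have hlam : ∀ i, 0 < lam i := fun i => hz i
  set P : Polynomial ℂ := (lineRestrict f lam a).map (algebraMap ℝ ℂ) +
      Polynomial.C Complex.I * (lineRestrict g lam a).map (algebraMap ℝ ℂ) with hPdef
  have heval : ∀ t : ℂ, P.eval t =
      MvPolynomial.aeval (fun j => (lam j : ℂ) * t + (a j : ℂ)) f +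
        Complex.I * MvPolynomial.aeval (fun j => (lam j : ℂ) * t + (a j : ℂ)) g := by
    intro t
    rw [hPdef]
    simp only [Polynomial.eval_add, Polynomial.eval_mul, Polynomial.eval_C,
      Polynomial.eval_map, ← Polynomial.aeval_def]
    rw [aeval_lineRestrict, aeval_lineRestrict]
  have hstar : P.map (starRingEnd ℂ) = (lineRestrict f lam a).map (algebraMap ℝ ℂ) +
      Polynomial.C (-Complex.I) * (lineRestrict g lam a).map (algebraMap ℝ ℂ) := by
    have hcomp : (starRingEnd ℂ).comp (algebraMap ℝ ℂ) = algebraMap ℝ ℂ :=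
      RingHom.ext fun r => Complex.conj_ofReal r
    rw [hPdef]
    rw [Polynomial.map_add, Polynomial.map_mul, Polynomial.map_C, Polynomial.map_map,
      Polynomial.map_map, hcomp, Complex.conj_I]
  have hevalstar : ∀ t : ℂ, (P.map (starRingEnd ℂ)).eval t =
      MvPolynomial.aeval (fun j => (lam j : ℂ) * t + (a j : ℂ)) f -
        Complex.I * MvPolynomial.aeval (fun j => (lam j : ℂ) * t + (a j : ℂ)) g := by
    intro t
    rw [hstar]
    simp only [Polynomial.eval_add, Polynomial.eval_mul, Polynomial.eval_C,
      Polynomial.eval_map, ← Polynomial.aeval_def]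
    rw [aeval_lineRestrict, aeval_lineRestrict]
    ring
  have hP : ∀ t : ℂ, 0 < t.im → P.eval t ≠ 0 := by
    intro t ht
    rw [heval t]
    exact hst _ (line_mem lam a hlam ht)
  have hkey := abs_eval_map_conj_le P hP (t := Complex.I) (by simp)
  have hline : (fun j => (lam j : ℂ) * Complex.I + (a j : ℂ)) = z := by
    funext j
    rw [hlamdef, hadef]
    apply Complex.ext <;> simp
  rw [heval, hevalstar, hline] at hkey
  exact hkey

/-- If moreover equality of moduli holds at one point of the polydisk, then
`f - ig` is a constant multiple of `f + ig`. -/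
lemma ratio_const (f g : MvPolynomial (Fin n) ℝ)
    (hst : ∀ z : Fin n → ℂ, (∀ i, 0 < (z i).im) →
      MvPolynomial.aeval z f + Complex.I * MvPolynomial.aeval z g ≠ 0)
    (z₀ : Fin n → ℂ) (hz₀ : ∀ j, 0 < (z₀ j).im)
    (heq : ‖MvPolynomial.aeval z₀ f - Complex.I * MvPolynomial.aeval z₀ g‖ =
      ‖MvPolynomial.aeval z₀ f + Complex.I * MvPolynomial.aeval z₀ g‖) :
    ∃ ω : ℂ, MvPolynomial.map (algebraMap ℝ ℂ) f - Complex.I • MvPolynomial.map (algebraMap ℝ ℂ) g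
      = MvPolynomial.C ω * (MvPolynomial.map (algebraMap ℝ ℂ) f +
          Complex.I • MvPolynomial.map (algebraMap ℝ ℂ) g) := by
  set H : MvPolynomial (Fin n) ℂ := MvPolynomial.map (algebraMap ℝ ℂ) f +
      Complex.I • MvPolynomial.map (algebraMap ℝ ℂ) g with hHdef
  set Hs : MvPolynomial (Fin n) ℂ := MvPolynomial.map (algebraMap ℝ ℂ) f -
      Complex.I • MvPolynomial.map (algebraMap ℝ ℂ) g with hHsdef
  set U : Set (Fin n → ℂ) := {z | ∀ j, 0 < (z j).im} with hUdef
  have hH0 : ∀ z ∈ U, MvPolynomial.eval z H ≠ 0 := by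
    intro z hz
    rw [hHdef, eval_H]
    exact hst z hz
  have hle : ∀ z ∈ U, ‖MvPolynomial.eval z Hs‖ ≤
      ‖MvPolynomial.eval z H‖ := by
    intro z hz
    rw [hHdef, eval_H, hHsdef, eval_Hs]
    exact abs_sub_le_abs_add f g hst z hz
  have hUopen : IsOpen U := by
    have : U = Set.pi Set.univ (fun _ : Fin n => {w : ℂ | 0 < w.im}) := by
      ext z; simp [hUdef, Set.mem_pi]
    rw [this]
    exact isOpen_set_pi Set.finite_univ
      (fun i _ => isOpen_lt continuous_const Complex.continuous_im)
  have hUconv : Convex ℝ U := by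
    intro x hx y hy s t hs ht hst'
    intro j
    have hxj := hx j
    have hyj := hy j
    simp only [Pi.add_apply, Pi.smul_apply, Complex.add_im, Complex.smul_im, smul_eq_mul] at *
    rcases eq_or_lt_of_le hs with rfl | hs'
    · simp only [zero_smul, zero_mul] at *
      have : t = 1 := by linarith
      rw [this] at *
      simpa using hyj
    · have h1 : 0 < s * (x j).im := mul_pos hs' hxj
      have h2 : 0 ≤ t * (y j).im := mul_nonneg ht hyj.le
      linarith
  have hz₀U : z₀ ∈ U := hz₀
  have hdiff : DifferentiableOn ℂ (fun z => MvPolynomial.eval z Hs / MvPolynomial.eval z H) U := by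
    simp only [div_eq_mul_inv]
    exact ((mv_eval_differentiable Hs).differentiableOn (s := U)).mul
      (((mv_eval_differentiable H).differentiableOn).inv hH0)
  have hmax : IsMaxOn (norm ∘ (fun z => MvPolynomial.eval z Hs / MvPolynomial.eval z H)) U z₀ := by
    intro z hz
    have h1 : ‖MvPolynomial.eval z Hs / MvPolynomial.eval z H‖ ≤ 1 := by
      simp only [norm_div]
      exact div_le_one_of_le₀ (hle z hz) (norm_nonneg _)
    have h2 : ‖MvPolynomial.eval z₀ Hs / MvPolynomial.eval z₀ H‖ = 1 := by
      simp only [norm_div]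
      rw [hHdef, eval_H, hHsdef, eval_Hs, heq]
      exact div_self (norm_ne_zero_iff.mpr (by rw [← eval_H f g z₀]; exact hH0 z₀ hz₀U))
    simp only [Set.mem_setOf_eq, Function.comp_apply]
    rw [h2]
    exact h1
  have hconst := Complex.eqOn_of_isPreconnected_of_isMaxOn_norm hUconv.isPreconnected
    hUopen hdiff hz₀U hmax
  refine ⟨MvPolynomial.eval z₀ Hs / MvPolynomial.eval z₀ H, ?_⟩
  have hzero : Hs - MvPolynomial.C (MvPolynomial.eval z₀ Hs / MvPolynomial.eval z₀ H) * H = 0 := by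
    apply mv_eq_zero_of_upper
    intro z hz
    have hΦz : MvPolynomial.eval z Hs / MvPolynomial.eval z H =
        MvPolynomial.eval z₀ Hs / MvPolynomial.eval z₀ H := hconst hz
    rw [map_sub, map_mul, MvPolynomial.eval_C]
    rw [div_eq_iff (hH0 z hz)] at hΦz
    rw [hΦz]
    ring
  have := sub_eq_zero.mp hzero
  exact this

/-- Non-proportionality rules out `f - ig = ω (f + ig)`. -/
lemma no_ratio (f g : MvPolynomial (Fin n) ℝ) (hf : f ≠ 0) (hg : g ≠ 0)
    (hmult : ¬∃ c : ℝ, f = c • g) (ω : ℂ)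
    (hrel : MvPolynomial.map (algebraMap ℝ ℂ) f -
        Complex.I • MvPolynomial.map (algebraMap ℝ ℂ) g
      = MvPolynomial.C ω * (MvPolynomial.map (algebraMap ℝ ℂ) f +
          Complex.I • MvPolynomial.map (algebraMap ℝ ℂ) g)) : False := by
  have hcoeff : ∀ m : Fin n →₀ ℕ, (((MvPolynomial.coeff m f : ℝ) : ℂ) - Complex.I * ((MvPolynomial.coeff m g : ℝ) : ℂ)) =
      ω * (((MvPolynomial.coeff m f : ℝ) : ℂ) + Complex.I * ((MvPolynomial.coeff m g : ℝ) : ℂ)) := by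
    intro m
    have := congrArg (fun p => MvPolynomial.coeff m p) hrel
    simpa [MvPolynomial.coeff_map, MvPolynomial.coeff_smul, MvPolynomial.coeff_C_mul,
      smul_eq_mul, Complex.coe_algebraMap] using this
  obtain ⟨m₀, hm₀⟩ := MvPolynomial.ne_zero_iff.mp hg
  rcases eq_or_ne ω 1 with rfl | hω
  · have := hcoeff m₀
    have hg0 : ((MvPolynomial.coeff m₀ g : ℝ) : ℂ) = 0 := by
      have hI : (2 : ℂ) * Complex.I * ((MvPolynomial.coeff m₀ g : ℝ) : ℂ) = 0 := by linear_combination -this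
      have h2I : (2 : ℂ) * Complex.I ≠ 0 := by
        simp [Complex.I_ne_zero]
      exact (mul_eq_zero.mp hI).resolve_left h2I
    exact hm₀ (by exact_mod_cast hg0)
  · have hfc : ∀ m : Fin n →₀ ℕ, ((MvPolynomial.coeff m f : ℝ) : ℂ) =
        (Complex.I * (1 + ω) / (1 - ω)) * ((MvPolynomial.coeff m g : ℝ) : ℂ) := by
      intro m
      have h := hcoeff m
      have h1ω : (1 : ℂ) - ω ≠ 0 := sub_ne_zero.mpr (Ne.symm hω)
      field_simp
      linear_combination h
    set cr : ℝ := MvPolynomial.coeff m₀ f / MvPolynomial.coeff m₀ g with hcrdef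
    have hgm₀C : ((MvPolynomial.coeff m₀ g : ℝ) : ℂ) ≠ 0 := by exact_mod_cast hm₀
    have hc : (Complex.I * (1 + ω) / (1 - ω)) = (cr : ℂ) := by
      rw [hcrdef, Complex.ofReal_div, eq_div_iff hgm₀C]
      exact (hfc m₀).symm
    apply hmult
    refine ⟨cr, ?_⟩
    apply MvPolynomial.ext
    intro m
    have h := hfc m
    rw [hc] at h
    have : ((MvPolynomial.coeff m f : ℝ) : ℂ) = ((cr * MvPolynomial.coeff m g : ℝ) : ℂ) := by push_cast; exact h
    have hr : MvPolynomial.coeff m f = cr * MvPolynomial.coeff m g := by exact_mod_cast this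
    rw [hr, MvPolynomial.coeff_smul]
    simp [smul_eq_mul]

variable {n : ℕ} in
lemma strict_ineq (f g : MvPolynomial (Fin n) ℝ) (hf : f ≠ 0) (hg : g ≠ 0)
    (hmult : ¬∃ c : ℝ, f = c • g)
    (hst : ∀ z : Fin n → ℂ, (∀ i, 0 < (z i).im) →
      MvPolynomial.aeval z f + Complex.I * MvPolynomial.aeval z g ≠ 0)
    (z : Fin n → ℂ) (hz : ∀ j, 0 < (z j).im) :
    ‖MvPolynomial.aeval z f - Complex.I * MvPolynomial.aeval z g‖ <
      ‖MvPolynomial.aeval z f + Complex.I * MvPolynomial.aeval z g‖ := by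
  rcases lt_or_eq_of_le (abs_sub_le_abs_add f g hst z hz) with hlt | heq
  · exact hlt
  · exfalso
    obtain ⟨ω, hrel⟩ := ratio_const f g hst z hz heq
    exact no_ratio f g hf hg hmult ω hrel

variable {n : ℕ} in
lemma g_ne_zero (f g : MvPolynomial (Fin n) ℝ) (hf : f ≠ 0) (hg : g ≠ 0)
    (hmult : ¬∃ c : ℝ, f = c • g)
    (hst : ∀ z : Fin n → ℂ, (∀ i, 0 < (z i).im) →
      MvPolynomial.aeval z f + Complex.I * MvPolynomial.aeval z g ≠ 0)
    (z : Fin n → ℂ) (hz : ∀ j, 0 < (z j).im) : MvPolynomial.aeval z g ≠ 0 := by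
  intro h0
  have := strict_ineq f g hf hg hmult hst z hz
  rw [h0] at this
  simp at this

variable {n : ℕ} in
lemma f_ne_zero (f g : MvPolynomial (Fin n) ℝ) (hf : f ≠ 0) (hg : g ≠ 0)
    (hmult : ¬∃ c : ℝ, f = c • g)
    (hst : ∀ z : Fin n → ℂ, (∀ i, 0 < (z i).im) →
      MvPolynomial.aeval z f + Complex.I * MvPolynomial.aeval z g ≠ 0)
    (z : Fin n → ℂ) (hz : ∀ j, 0 < (z j).im) : MvPolynomial.aeval z f ≠ 0 := by
  intro h0
  have := strict_ineq f g hf hg hmult hst z hz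
  rw [h0] at this
  simp at this

variable {n : ℕ} in
lemma im_ratio_nonneg (f g : MvPolynomial (Fin n) ℝ) (hf : f ≠ 0) (hg : g ≠ 0)
    (hmult : ¬∃ c : ℝ, f = c • g)
    (hst : ∀ z : Fin n → ℂ, (∀ i, 0 < (z i).im) →
      MvPolynomial.aeval z f + Complex.I * MvPolynomial.aeval z g ≠ 0)
    (z : Fin n → ℂ) (hz : ∀ j, 0 < (z j).im) :
    0 ≤ (MvPolynomial.aeval z f / MvPolynomial.aeval z g).im := by
  have hlt := strict_ineq f g hf hg hmult hst z hz
  set F := MvPolynomial.aeval z f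
  set G := MvPolynomial.aeval z g
  have hsq : Complex.normSq (F - Complex.I * G) ≤ Complex.normSq (F + Complex.I * G) := by
    rw [← Complex.sq_norm, ← Complex.sq_norm]
    exact pow_le_pow_left₀ (norm_nonneg _) hlt.le 2
  have hnum : 0 ≤ F.im * G.re - F.re * G.im := by
    simp only [Complex.normSq_apply, Complex.add_re, Complex.add_im, Complex.sub_re,
      Complex.sub_im, Complex.mul_re, Complex.mul_im, Complex.I_re, Complex.I_im] at hsq
    nlinarith
  rw [Complex.div_im]
  rw [div_sub_div_same]
  exact div_nonneg hnum (Complex.normSq_nonneg G)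

end HBaux

open HBaux in
theorem hermite_biehler_multivariate (n : ℕ) (f g : MvPolynomial (Fin n) ℝ)
    (hf : f ≠ 0) (hg : g ≠ 0) (hmult : ¬∃ c : ℝ, f = c • g) :
    letI h : MvPolynomial (Fin n) ℂ :=
      MvPolynomial.map (algebraMap ℝ ℂ) f +
        Complex.I • MvPolynomial.map (algebraMap ℝ ℂ) g
    (IsStable h ↔
      (∀ z : Fin n → ℂ, (∀ j, 0 < (z j).im) →
        ‖MvPolynomial.eval (fun j => starRingEnd ℂ (z j)) h‖ <
          ‖MvPolynomial.eval z h‖)) ∧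
    (IsStable h ↔
      IsRealStable (rename Fin.castSucc f +
        X (Fin.last n) * rename Fin.castSucc g)) ∧
    (IsStable h ↔
      (IsRealStable f ∧ IsRealStable g ∧
        ∀ z : Fin n → ℂ, (∀ j, 0 < (z j).im) →
          0 ≤ (MvPolynomial.aeval z f / MvPolynomial.aeval z g).im)) ∧
    (IsStable h ↔
      (∀ lam a : Fin n → ℝ, (∀ i, 0 < lam i) →
        ∀ t : ℂ, 0 < t.im →
          Polynomial.aeval t (lineRestrict f lam a) +
            Complex.I * Polynomial.aeval t (lineRestrict g lam a) ≠ 0)) := by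
  have stform : IsStable (MvPolynomial.map (algebraMap ℝ ℂ) f +
      Complex.I • MvPolynomial.map (algebraMap ℝ ℂ) g) ↔
      ∀ z : Fin n → ℂ, (∀ i, 0 < (z i).im) →
        MvPolynomial.aeval z f + Complex.I * MvPolynomial.aeval z g ≠ 0 := by
    unfold IsStable
    constructor <;> intro hh z hz
    · rw [← eval_H f g z]; exact hh z hz
    · rw [eval_H f g z]
      exact hh z hz
  refine ⟨?_, ?_, ?_, ?_⟩
  · -- (1) ↔ (2)
    rw [stform]
    constructor
    · intro hst z hz
      have hconj : MvPolynomial.eval (fun j => starRingEnd ℂ (z j))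
          (MvPolynomial.map (algebraMap ℝ ℂ) f +
            Complex.I • MvPolynomial.map (algebraMap ℝ ℂ) g) =
          starRingEnd ℂ (MvPolynomial.aeval z f - Complex.I * MvPolynomial.aeval z g) := by
        rw [eval_H f g (fun j => starRingEnd ℂ (z j)), aeval_conj, aeval_conj,
          map_sub, map_mul, Complex.conj_I]
        ring
      rw [hconj, Complex.norm_conj, eval_H f g z]
      exact strict_ineq f g hf hg hmult hst z hz
    · intro h2 z hz
      have := h2 z hz
      rw [← eval_H f g z]
      intro h0
      rw [h0] at this
      simp only [norm_zero] at this
      exact absurd this (not_lt.mpr (norm_nonneg _))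
  · -- (1) ↔ (3)
    rw [stform]
    constructor
    · intro hst w hw
      set z : Fin n → ℂ := w ∘ Fin.castSucc with hzdef
      have hz : ∀ i, 0 < (z i).im := fun i => hw _
      rw [map_add, map_mul, MvPolynomial.aeval_rename, MvPolynomial.aeval_rename,
        MvPolynomial.aeval_X]
      intro h0
      have hGne := g_ne_zero f g hf hg hmult hst z hz
      have hratio : MvPolynomial.aeval z f / MvPolynomial.aeval z g = -w (Fin.last n) := by
        rw [div_eq_iff hGne]
        linear_combination h0
      have him := im_ratio_nonneg f g hf hg hmult hst z hz
      rw [hratio] at him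
      simp only [Complex.neg_im] at him
      have := hw (Fin.last n)
      linarith
    · intro h3 z hz
      set w : Fin (n + 1) → ℂ := Fin.snoc z Complex.I with hwdef
      have hw : ∀ i, 0 < (w i).im := by
        intro i
        refine Fin.lastCases ?_ ?_ i
        · simp [hwdef, Fin.snoc_last, Complex.I_im]
        · intro j
          simp only [hwdef, Fin.snoc_castSucc]
          exact hz j
      have := h3 w hw
      rw [map_add, map_mul, MvPolynomial.aeval_rename, MvPolynomial.aeval_rename,
        MvPolynomial.aeval_X] at this
      have hcomp : w ∘ Fin.castSucc = z := by
        funext j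
        simp [hwdef, Fin.snoc_castSucc]
      have hlast : w (Fin.last n) = Complex.I := by simp [hwdef, Fin.snoc_last]
      rw [hcomp, hlast] at this
      exact this
  · -- (1) ↔ (4)
    rw [stform]
    constructor
    · intro hst
      exact ⟨fun z hz => f_ne_zero f g hf hg hmult hst z hz,
        fun z hz => g_ne_zero f g hf hg hmult hst z hz,
        fun z hz => im_ratio_nonneg f g hf hg hmult hst z hz⟩
    · rintro ⟨hfs, hgs, him4⟩ z hz h0
      have hG := hgs z hz
      have hratio : MvPolynomial.aeval z f / MvPolynomial.aeval z g = -Complex.I := by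
        rw [div_eq_iff hG]
        linear_combination h0
      have := him4 z hz
      rw [hratio] at this
      simp only [Complex.neg_im, Complex.I_im] at this
      linarith
  · -- (1) ↔ (5)
    rw [stform]
    constructor
    · intro hst lam a hlam t ht
      rw [aeval_lineRestrict, aeval_lineRestrict]
      exact hst _ (line_mem lam a hlam ht)
    · intro h5 z hz
      have := h5 (fun j => (z j).im) (fun j => (z j).re) (fun j => hz j) Complex.I (by simp)
      rw [aeval_lineRestrict, aeval_lineRestrict] at this
      have hline : (fun j => (((z j).im : ℝ) : ℂ) * Complex.I + (((z j).re : ℝ) : ℂ)) = z := by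
        funext j
        apply Complex.ext <;> simp
      rw [hline] at this
      exact this
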